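/- Let p ∈ (1, ∞) be a real number, ν > 0, n ≥ 2 an integer, D > 0, and κ, λ ∈ ℝ. Let φ : ℝ → ℝ be twice differentiable with φ''(s) = −κ·φ(s) for all s, φ(0) = 1, φ'(0) = −λ, and suppose φ(s) > 0 for all s ∈ [0, D]. Let ϕ : ℝ → ℝ be differentiable on [0, D] with ϕ(0) = 0, ϕ'(D) = 0 and ϕ(s) > 0 for all s ∈ (0, D], and suppose the function Ψ(s) := |ϕ'(s)|^{p−2}·ϕ'(s)·φ(s)^{n−1} is differentiable on [0, D] with Ψ'(s) = −ν·|ϕ(s)|^{p−2}·ϕ(s)·φ(s)^{n−1} for all s ∈ [0, D]. Then ϕ'(s) > 0 for all s ∈ [0, D). -/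
import Mathlib


/-- The positive Dirichlet-Neumann eigenfunction of the model
weighted `p`-Laplacian eigenvalue problem has strictly positive derivative on
`[0, D)`: if `φ` is the Jacobi solution (positive on `[0, D]`) and `ψ`
satisfies `ψ(0) = 0`, `ψ'(D) = 0`, `ψ > 0` on `(0, D]`, and
`(|ψ'|^{p-2} ψ' φ^{n-1})' = -ν |ψ|^{p-2} ψ φ^{n-1}` on `[0, D]`,
then `ψ' > 0` on `[0, D)`. -/
theorem model_eigenfunction_deriv_pos (p ν : ℝ) (hp : 1 < p) (hν : 0 < ν)
    (n : ℕ) (hn : 2 ≤ n) (D κ lam : ℝ) (hD : 0 < D) (φ : ℝ → ℝ)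
    (hφ : Differentiable ℝ φ) (hφ' : Differentiable ℝ (deriv φ))
    (hode : ∀ s : ℝ, deriv (deriv φ) s = -κ * φ s)
    (hφ0 : φ 0 = 1) (hφ0' : deriv φ 0 = -lam)
    (hφpos : ∀ s ∈ Set.Icc (0 : ℝ) D, 0 < φ s)
    (ψ : ℝ → ℝ)
    (hψdiff : ∀ s ∈ Set.Icc (0 : ℝ) D, DifferentiableAt ℝ ψ s)
    (hψ0 : ψ 0 = 0) (hψD : deriv ψ D = 0)
    (hψpos : ∀ s ∈ Set.Ioc (0 : ℝ) D, 0 < ψ s)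
    (hΨ : ∀ s ∈ Set.Icc (0 : ℝ) D,
      HasDerivAt (fun u => |deriv ψ u| ^ (p - 2) * deriv ψ u * φ u ^ (n - 1))
        (-ν * |ψ s| ^ (p - 2) * ψ s * φ s ^ (n - 1)) s) :
    ∀ s ∈ Set.Ico (0 : ℝ) D, 0 < deriv ψ s := by

  intro s hs
  obtain ⟨hs0, hsD⟩ := hs
  set F : ℝ → ℝ := fun u => |deriv ψ u| ^ (p - 2) * deriv ψ u * φ u ^ (n - 1)
    with hF
  have hsub : Set.Icc s D ⊆ Set.Icc 0 D := Set.Icc_subset_Icc hs0 le_rfl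
  have hanti : StrictAntiOn F (Set.Icc s D) := by
    apply strictAntiOn_of_deriv_neg (convex_Icc s D)
    · intro x hx
      exact ((hΨ x (hsub hx)).continuousAt).continuousWithinAt
    · intro x hx
      rw [interior_Icc] at hx
      have hx' : x ∈ Set.Icc (0:ℝ) D := ⟨le_of_lt (lt_of_le_of_lt hs0 hx.1), le_of_lt hx.2⟩
      rw [(hΨ x hx').deriv]
      have hψx : 0 < ψ x := hψpos x ⟨lt_of_le_of_lt hs0 hx.1, le_of_lt hx.2⟩
      have h1 : 0 < |ψ x| ^ (p - 2) := Real.rpow_pos_of_pos (abs_pos.mpr (ne_of_gt hψx)) _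
      have h2 : 0 < φ x ^ (n - 1) := pow_pos (hφpos x hx') _
      have : 0 < ν * |ψ x| ^ (p - 2) * ψ x * φ x ^ (n - 1) := by positivity
      linarith
  have hFD : F D = 0 := by simp [hF, hψD]
  have hFs : 0 < F s := by
    have := hanti (Set.left_mem_Icc.mpr (le_of_lt hsD)) (Set.right_mem_Icc.mpr (le_of_lt hsD)) hsD
    linarith
  by_contra h
  push_neg at h
  have h1 : 0 ≤ |deriv ψ s| ^ (p - 2) := Real.rpow_nonneg (abs_nonneg _) _
  have h2 : 0 < φ s ^ (n - 1) := pow_pos (hφpos s ⟨hs0, le_of_lt hsD⟩) _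
  have : F s ≤ 0 := by
    have : |deriv ψ s| ^ (p - 2) * deriv ψ s ≤ 0 := mul_nonpos_of_nonneg_of_nonpos h1 h
    exact mul_nonpos_of_nonpos_of_nonneg this (le_of_lt h2)
  linarith
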